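/- In the space c₀ with the supremum norm and the nonnegative cone K = (c₀)₊, the set A = {a^(k) ∣ k ≥ 1}, where a^(k) has coordinates k² for n ≤ k, −k at position k+1, and 0 otherwise, is dually K-bounded (for every x* ∈ ℓ¹₊ the set x*(A) is bounded below) but not K-bounded (there is no ℓ ≥ 0 with A ⊂ ℓ·D + K); indeed d(a^(k), K) = k for every k. -/

import Mathlib

open Pointwise Filter

noncomputable section

/-- The element `a^(k) ∈ c₀`: value `k²` on coordinates `0,…,k-1`, `-k` at
coordinate `k`, and `0` afterwards. -/
def aSeq (k : ℕ) : ZeroAtInftyContinuousMap ℕ ℝ where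
  toFun := fun n => if n < k then (k : ℝ) ^ 2 else if n = k then -(k : ℝ) else 0
  continuous_toFun := continuous_of_discreteTopology
  zero_at_infty' := by
    rw [cocompact_eq_atTop (α := ℕ)]
    have h : ∀ᶠ n in atTop,
        (if n < k then (k : ℝ) ^ 2 else if n = k then -(k : ℝ) else 0) = 0 := by
      filter_upwards [eventually_ge_atTop (k + 1)] with n hn
      have h1 : ¬ n < k := by omega
      have h2 : n ≠ k := by omega
      simp [h1, h2]
    exact Tendsto.congr' (by filter_upwards [h] with n hn; exact hn.symm)
      tendsto_const_nhds

/-- A finitely supported function as an element of `c₀`. -/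
def finSupp (g : ℕ → ℝ) (m : ℕ) (hg : ∀ n, m ≤ n → g n = 0) :
    ZeroAtInftyContinuousMap ℕ ℝ where
  toFun := g
  continuous_toFun := continuous_of_discreteTopology
  zero_at_infty' := by
    rw [cocompact_eq_atTop (α := ℕ)]
    exact Tendsto.congr'
      (by filter_upwards [eventually_ge_atTop m] with n hn using (hg n hn).symm)
      tendsto_const_nhds

/-- The indicator of `{0,…,k-1}` in `c₀`. -/
def indSeq (k : ℕ) : ZeroAtInftyContinuousMap ℕ ℝ :=
  finSupp (fun n => if n < k then 1 else 0) k (fun n hn => by simp; omega)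

/-- The standard basis vector `e_k` in `c₀`. -/
def eSeq (k : ℕ) : ZeroAtInftyContinuousMap ℕ ℝ :=
  finSupp (fun n => if n = k then 1 else 0) (k + 1) (fun n hn => by simp; omega)

@[simp] lemma indSeq_apply (k n : ℕ) : indSeq k n = if n < k then 1 else 0 := rfl
@[simp] lemma eSeq_apply (k n : ℕ) : eSeq k n = if n = k then 1 else 0 := rfl
@[simp] lemma aSeq_apply (k n : ℕ) :
    aSeq k n = if n < k then (k : ℝ) ^ 2 else if n = k then -(k : ℝ) else 0 := rfl

lemma aSeq_eq (k : ℕ) : aSeq k = (k : ℝ) ^ 2 • indSeq k - (k : ℝ) • eSeq k := by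
  ext n
  simp only [ZeroAtInftyContinuousMap.coe_sub, ZeroAtInftyContinuousMap.coe_smul,
    Pi.sub_apply, Pi.smul_apply, aSeq_apply, indSeq_apply, eSeq_apply, smul_eq_mul]
  rcases lt_trichotomy n k with h | h | h
  · simp [h, h.ne]
  · simp [h]
  · have h1 : ¬ n < k := by omega
    have h2 : n ≠ k := by omega
    simp [h1, h2]

lemma indSeq_succ (k : ℕ) : indSeq (k + 1) = indSeq k + eSeq k := by
  ext n
  simp only [ZeroAtInftyContinuousMap.coe_add, Pi.add_apply, indSeq_apply, eSeq_apply]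
  rcases lt_trichotomy n k with h | h | h
  · have : n < k + 1 := by omega
    simp [h, this, h.ne]
  · subst h; simp
  · have h1 : ¬ n < k := by omega
    have h2 : ¬ n < k + 1 := by omega
    have h3 : n ≠ k := by omega
    simp [h1, h2, h3]

lemma indSeq_zero : indSeq 0 = 0 := by
  ext n; simp

lemma norm_apply_le (x : ZeroAtInftyContinuousMap ℕ ℝ) (n : ℕ) : |x n| ≤ ‖x‖ := by
  rw [← ZeroAtInftyContinuousMap.norm_toBCF_eq_norm]
  exact (x.toBCF.norm_coe_le_norm n)

lemma norm_le_of_bound {x : ZeroAtInftyContinuousMap ℕ ℝ} {C : ℝ} (hC : 0 ≤ C)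
    (h : ∀ n, |x n| ≤ C) : ‖x‖ ≤ C := by
  rw [← ZeroAtInftyContinuousMap.norm_toBCF_eq_norm]
  exact BoundedContinuousFunction.norm_le hC |>.mpr h

lemma norm_eSeq (k : ℕ) : ‖eSeq k‖ = 1 := by
  refine le_antisymm (norm_le_of_bound zero_le_one fun n => ?_) ?_
  · simp only [eSeq_apply]
    split <;> simp
  · have := norm_apply_le (eSeq k) k
    simpa using this

lemma norm_indSeq_le (k : ℕ) : ‖indSeq k‖ ≤ 1 := by
  refine norm_le_of_bound zero_le_one fun n => ?_
  simp only [indSeq_apply]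
  split <;> simp

/-- The key distance computation: `d(aSeq k, K) = k`. -/
lemma infDist_aSeq (k : ℕ) (hk : 1 ≤ k) :
    Metric.infDist (aSeq k) {x : ZeroAtInftyContinuousMap ℕ ℝ | ∀ n : ℕ, 0 ≤ x n} = k := by
  set K : Set (ZeroAtInftyContinuousMap ℕ ℝ) := {x | ∀ n : ℕ, 0 ≤ x n} with hK
  have hKne : K.Nonempty := ⟨0, fun n => le_refl 0⟩
  have hkpos : (0 : ℝ) < k := by exact_mod_cast hk
  refine le_antisymm ?_ ?_
  · -- upper bound, using y = k² • indSeq k ∈ K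
    have hy : (k : ℝ) ^ 2 • indSeq k ∈ K := by
      intro n
      simp only [ZeroAtInftyContinuousMap.coe_smul, Pi.smul_apply, indSeq_apply, smul_eq_mul]
      split <;> positivity
    calc Metric.infDist (aSeq k) K ≤ dist (aSeq k) ((k : ℝ) ^ 2 • indSeq k) :=
          Metric.infDist_le_dist_of_mem hy
      _ = ‖aSeq k - (k : ℝ) ^ 2 • indSeq k‖ := dist_eq_norm _ _
      _ = ‖(k : ℝ) • eSeq k‖ := by rw [aSeq_eq, sub_sub_cancel_left, norm_neg]
      _ = (k : ℝ) := by
          have h := norm_smul (α := ℝ) (β := ZeroAtInftyContinuousMap ℕ ℝ) (k : ℝ) (eSeq k)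
          rw [h, norm_eSeq, Real.norm_natCast, mul_one]
  · -- lower bound
    by_contra h
    push_neg at h
    obtain ⟨y, hy, hdy⟩ := (Metric.infDist_lt_iff hKne).mp h
    have h1 : |(aSeq k - y) k| ≤ ‖aSeq k - y‖ := norm_apply_le _ _
    have h2 : (aSeq k - y) k = -(k : ℝ) - y k := by
      simp [ZeroAtInftyContinuousMap.coe_sub, Pi.sub_apply]
    have h3 : (k : ℝ) ≤ |(aSeq k - y) k| := by
      rw [h2, abs_sub_comm, abs_of_nonneg (by have := hy k; linarith)]
      have := hy k; linarith
    rw [dist_eq_norm] at hdy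
    linarith

/-- In `c₀` with the nonnegative cone, the set `A = {a^(k) | k ≥ 1}` is dually
K-bounded but not K-bounded; indeed `d(a^(k),K) = k` for all `k ≥ 1`. -/
theorem c0_example_dually_bounded_not_bounded :
    let K : Set (ZeroAtInftyContinuousMap ℕ ℝ) := {x | ∀ n : ℕ, 0 ≤ x n}
    let A : Set (ZeroAtInftyContinuousMap ℕ ℝ) := {x | ∃ k : ℕ, 1 ≤ k ∧ x = aSeq k}
    (∀ f : ZeroAtInftyContinuousMap ℕ ℝ →L[ℝ] ℝ,
        (∀ x ∈ K, 0 ≤ f x) → BddBelow (f '' A)) ∧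
    (¬ ∃ ℓ : ℝ, 0 ≤ ℓ ∧ A ⊆ Metric.closedBall (0 : ZeroAtInftyContinuousMap ℕ ℝ) ℓ + K) ∧
    (∀ k : ℕ, 1 ≤ k → Metric.infDist (aSeq k) K = k) := by
  intro K A
  have hKne : K.Nonempty := ⟨0, fun n => le_refl 0⟩
  refine ⟨?_, ?_, fun k hk => infDist_aSeq k hk⟩
  · -- dually K-bounded
    intro f hf
    set c : ℕ → ℝ := fun n => f (eSeq n) with hcdef
    set S : ℕ → ℝ := fun k => f (indSeq k) with hSdef
    have hc : ∀ n, 0 ≤ c n := fun n => hf _ (fun m => by simp only [eSeq_apply]; split <;> simp)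
    have hS0 : S 0 = 0 := by simp [hSdef, indSeq_zero]
    have hSsucc : ∀ k, S (k + 1) = S k + c k := by
      intro k; simp [hSdef, hcdef, indSeq_succ, map_add]
    have hfval : ∀ k : ℕ, f (aSeq k) = (k : ℝ) ^ 2 * S k - (k : ℝ) * c k := by
      intro k
      rw [aSeq_eq, map_sub, map_smul, map_smul]
      simp [hSdef, hcdef]
    have hcbd : ∀ k, c k ≤ ‖f‖ := by
      intro k
      calc c k ≤ |c k| := le_abs_self _
        _ ≤ ‖f‖ * ‖eSeq k‖ := f.le_opNorm _
        _ = ‖f‖ := by rw [norm_eSeq, mul_one]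
    -- eventually nonnegative
    have key : ∃ N : ℕ, ∀ k ≥ N, 0 ≤ f (aSeq k) := by
      by_cases hall : ∀ n, c n = 0
      · refine ⟨0, fun k _ => ?_⟩
        have hSz : ∀ k, S k = 0 := by
          intro k; induction k with
          | zero => exact hS0
          | succ j ih => rw [hSsucc, ih, hall, add_zero]
        rw [hfval, hSz, hall]; simp
      · push_neg at hall
        obtain ⟨m, hm⟩ := hall
        have hmpos : 0 < c m := lt_of_le_of_ne (hc m) (Ne.symm hm)
        have hSge : ∀ k, m + 1 ≤ k → c m ≤ S k := by
          intro k hk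
          induction k, hk using Nat.le_induction with
          | base =>
            rw [hSsucc]
            have hSm : 0 ≤ S m := hf _ (fun n => by simp only [indSeq_apply]; split <;> simp)
            linarith
          | succ j hj ih =>
            rw [hSsucc]
            have := hc j
            linarith
        refine ⟨max (m + 1) ⌈‖f‖ / c m⌉₊, fun k hk => ?_⟩
        have hk1 : m + 1 ≤ k := le_trans (le_max_left _ _) hk
        have hk2 : (⌈‖f‖ / c m⌉₊ : ℕ) ≤ k := le_trans (le_max_right _ _) hk
        have hkc : ‖f‖ ≤ (k : ℝ) * c m := by
          have h1 : ‖f‖ / c m ≤ (k : ℝ) := le_trans (Nat.le_ceil _) (by exact_mod_cast hk2)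
          calc ‖f‖ = (‖f‖ / c m) * c m := by field_simp
            _ ≤ (k : ℝ) * c m := by nlinarith
        rw [hfval]
        have hSk := hSge k hk1
        have hck := hcbd k
        have hknn : (0 : ℝ) ≤ k := Nat.cast_nonneg k
        nlinarith
    obtain ⟨N, hN⟩ := key
    set F : Finset ℝ := insert (0 : ℝ) ((Finset.range N).image (fun k => f (aSeq k))) with hF
    have hFne : F.Nonempty := ⟨0, Finset.mem_insert_self _ _⟩
    refine ⟨F.min' hFne, ?_⟩
    rintro y ⟨x, ⟨k, hk, rfl⟩, rfl⟩
    rcases Nat.lt_or_ge k N with hkN | hkN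
    · exact Finset.min'_le _ _ (Finset.mem_insert_of_mem
        (Finset.mem_image.mpr ⟨k, Finset.mem_range.mpr hkN, rfl⟩))
    · exact le_trans (Finset.min'_le _ _ (Finset.mem_insert_self _ _)) (hN k hkN)
  · -- not K-bounded
    rintro ⟨ℓ, hℓ, hsub⟩
    set k : ℕ := ⌈ℓ⌉₊ + 1 with hkdef
    have hk1 : 1 ≤ k := by omega
    have hmem : aSeq k ∈ A := ⟨k, hk1, rfl⟩
    obtain ⟨b, hb, y, hy, hby⟩ := hsub hmem
    have hdist : Metric.infDist (aSeq k) K ≤ ℓ := by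
      calc Metric.infDist (aSeq k) K ≤ dist (aSeq k) y := Metric.infDist_le_dist_of_mem hy
        _ = ‖aSeq k - y‖ := dist_eq_norm _ _
        _ = ‖b‖ := by rw [← hby, add_sub_cancel_right]
        _ ≤ ℓ := by simpa using Metric.mem_closedBall.mp hb
    rw [infDist_aSeq k hk1] at hdist
    have : ℓ < (k : ℝ) := by
      have h1 : ℓ ≤ (⌈ℓ⌉₊ : ℝ) := Nat.le_ceil ℓ
      have : ((⌈ℓ⌉₊ : ℕ) : ℝ) < (k : ℝ) := by exact_mod_cast Nat.lt_succ_self _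
      linarith
    linarith

end
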